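/- Let ε_1, ε_2 ∈ (0,1) satisfy (1−ε_1)·(1−ε_2)² > 1/4. Then the interval ( 1/(2(1−ε_2)), √(1−ε_1) ) is nonempty, and for every a in this interval and all x_1, x_2 ∈ ℝ the following hold: (i) if |x_1| ≥ x_2²/a², then (−x_1 + x_2²)·sign(x_1) ≤ −ε_1·|x_1|; (ii) if x_2²/a² ≥ |x_1|, then (2·x_2/a²)·(−x_2 + (1/2)·√|x_1|) ≤ −2·ε_2·x_2²/a². Consequently, along solutions of the coupled system ẋ_1 = −x_1 + x_2², ẋ_2 = −x_2 + (1/2)·√|x_1|, the function V(x) = max{ |x_1|, x_2²/a² } satisfies D⁺V(x) ≤ −min{ε_1, 2ε_2}·V(x). -/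

import Mathlib

open Set Filter

noncomputable section

private lemma tendsto_slope_right' {f : ℝ → ℝ} {f' t : ℝ} (hf : HasDerivAt f f' t) :
    Tendsto (fun h : ℝ => (f (t + h) - f t) / h) (nhdsWithin 0 (Ioi 0)) (nhds f') := by
  have h1 : Tendsto (fun h : ℝ => t + h) (nhdsWithin 0 (Ioi 0)) (nhdsWithin t {t}ᶜ) := by
    apply tendsto_nhdsWithin_of_tendsto_nhds_of_eventually_within
    · have : Tendsto (fun h : ℝ => t + h) (nhds 0) (nhds (t + 0)) :=
        (continuous_const.add continuous_id).tendsto (0 : ℝ)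
      simpa using this.mono_left nhdsWithin_le_nhds
    · filter_upwards [self_mem_nhdsWithin] with h hh
      have : (0 : ℝ) < h := hh
      simp only [mem_compl_iff, mem_singleton_iff]
      intro heq
      have : h = 0 := by linarith [heq]
      linarith
  have h2 := (hasDerivAt_iff_tendsto_slope.mp hf).comp h1
  refine h2.congr fun h => ?_
  rw [Function.comp_apply, slope_def_field]
  ring_nf

private lemma hasDerivAt_abs_comp' {f : ℝ → ℝ} {f' t : ℝ} (hf : HasDerivAt f f' t)
    (h0 : f t ≠ 0) : HasDerivAt (fun s => |f s|) (f' * Real.sign (f t)) t := by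
  rcases h0.lt_or_gt with hneg | hpos
  · rw [Real.sign_of_neg hneg]
    have hev : ∀ᶠ s in nhds t, f s < 0 :=
      hf.continuousAt.eventually_lt continuousAt_const hneg
    have heq : (fun s => -f s) =ᶠ[nhds t] fun s => |f s| := by
      filter_upwards [hev] with s hs
      rw [abs_of_neg hs]
    have := hf.neg.congr_of_eventuallyEq heq.symm
    simpa [mul_comm] using this
  · rw [Real.sign_of_pos hpos]
    have hev : ∀ᶠ s in nhds t, 0 < f s :=
      continuousAt_const.eventually_lt hf.continuousAt hpos
    have heq : (fun s => f s) =ᶠ[nhds t] fun s => |f s| := by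
      filter_upwards [hev] with s hs
      rw [abs_of_pos hs]
    simpa using hf.congr_of_eventuallyEq heq.symm

/-- the nonlinear-gains example. Under the small-gain condition
`(1-ε₁)(1-ε₂)² > 1/4`, the interval `(1/(2(1-ε₂)), √(1-ε₁))` is nonempty and for every `a`
in it the two Lyapunov estimates (i), (ii) hold; consequently `V(x) = max{|x₁|, x₂²/a²}`
has upper right Dini derivative at most `-min{ε₁, 2ε₂}·V` along solutions of the coupled
system `ẋ₁ = -x₁ + x₂²`, `ẋ₂ = -x₂ + ½√|x₁|`. -/
theorem stmt15 (ε₁ ε₂ : ℝ) (h1 : ε₁ ∈ Ioo (0 : ℝ) 1) (h2 : ε₂ ∈ Ioo (0 : ℝ) 1)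
    (hsg : 1 / 4 < (1 - ε₁) * (1 - ε₂) ^ 2) :
    1 / (2 * (1 - ε₂)) < Real.sqrt (1 - ε₁) ∧
    ∀ a ∈ Ioo (1 / (2 * (1 - ε₂))) (Real.sqrt (1 - ε₁)),
      (∀ x₁ x₂ : ℝ, x₂ ^ 2 / a ^ 2 ≤ |x₁| →
        (-x₁ + x₂ ^ 2) * Real.sign x₁ ≤ -ε₁ * |x₁|) ∧
      (∀ x₁ x₂ : ℝ, |x₁| ≤ x₂ ^ 2 / a ^ 2 →
        (2 * x₂ / a ^ 2) * (-x₂ + (1 / 2) * Real.sqrt |x₁|) ≤ -(2 * ε₂) * (x₂ ^ 2 / a ^ 2)) ∧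
      (∀ x₁ x₂ : ℝ → ℝ, ∀ t : ℝ,
        HasDerivAt x₁ (-x₁ t + (x₂ t) ^ 2) t →
        HasDerivAt x₂ (-x₂ t + (1 / 2) * Real.sqrt |x₁ t|) t →
        limsup (fun h : ℝ =>
            (max |x₁ (t + h)| ((x₂ (t + h)) ^ 2 / a ^ 2) -
              max |x₁ t| ((x₂ t) ^ 2 / a ^ 2)) / h) (nhdsWithin 0 (Ioi 0)) ≤
          -(min ε₁ (2 * ε₂)) * max |x₁ t| ((x₂ t) ^ 2 / a ^ 2)) := by
  obtain ⟨he1, he1'⟩ := h1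
  obtain ⟨he2, he2'⟩ := h2
  have h1e1 : (0:ℝ) < 1 - ε₁ := by linarith
  have h1e2 : (0:ℝ) < 1 - ε₂ := by linarith
  have hlb : (0:ℝ) < 1 / (2 * (1 - ε₂)) := by positivity
  have hmain : 1 / (2 * (1 - ε₂)) < Real.sqrt (1 - ε₁) := by
    rw [show (1:ℝ) / (2 * (1 - ε₂)) = Real.sqrt ((1 / (2 * (1 - ε₂))) ^ 2) from
      (Real.sqrt_sq hlb.le).symm]
    apply Real.sqrt_lt_sqrt (by positivity)
    rw [div_pow, div_lt_iff₀ (by positivity)]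
    nlinarith
  refine ⟨hmain, fun a ha => ?_⟩
  obtain ⟨ha1, ha2⟩ := ha
  have ha0 : 0 < a := lt_trans hlb ha1
  have ha2' : a ^ 2 < 1 - ε₁ := by
    have hs : Real.sqrt (1 - ε₁) ^ 2 = 1 - ε₁ := Real.sq_sqrt h1e1.le
    nlinarith [Real.sqrt_nonneg (1 - ε₁)]
  have ha1' : 1 < 2 * (1 - ε₂) * a := by
    rw [div_lt_iff₀ (by positivity)] at ha1
    linarith
  have key1 : ∀ x₁ x₂ : ℝ, x₂ ^ 2 / a ^ 2 ≤ |x₁| →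
      (-x₁ + x₂ ^ 2) * Real.sign x₁ ≤ -ε₁ * |x₁| := by
    intro x₁ x₂ hle
    have hx2 : x₂ ^ 2 ≤ a ^ 2 * |x₁| := by
      rw [div_le_iff₀ (by positivity)] at hle
      linarith
    rcases lt_trichotomy x₁ 0 with hneg | hz | hpos
    · rw [Real.sign_of_neg hneg, abs_of_neg hneg]
      nlinarith [sq_nonneg x₂]
    · subst hz
      simp
    · rw [Real.sign_of_pos hpos, abs_of_pos hpos]
      rw [abs_of_pos hpos] at hx2
      nlinarith
  have key2 : ∀ x₁ x₂ : ℝ, |x₁| ≤ x₂ ^ 2 / a ^ 2 →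
      (2 * x₂ / a ^ 2) * (-x₂ + (1 / 2) * Real.sqrt |x₁|) ≤ -(2 * ε₂) * (x₂ ^ 2 / a ^ 2) := by
    intro x₁ x₂ hle
    have hsle : Real.sqrt |x₁| ≤ |x₂| / a := by
      calc Real.sqrt |x₁| ≤ Real.sqrt (x₂ ^ 2 / a ^ 2) := Real.sqrt_le_sqrt hle
        _ = |x₂ / a| := by rw [← div_pow, Real.sqrt_sq_eq_abs]
        _ = |x₂| / a := by rw [abs_div, abs_of_pos ha0]
    have hs0 : 0 ≤ Real.sqrt |x₁| := Real.sqrt_nonneg _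
    have hxs : x₂ * Real.sqrt |x₁| ≤ x₂ ^ 2 / a := by
      calc x₂ * Real.sqrt |x₁| ≤ |x₂| * Real.sqrt |x₁| := by
            exact mul_le_mul_of_nonneg_right (le_abs_self x₂) hs0
        _ ≤ |x₂| * (|x₂| / a) := mul_le_mul_of_nonneg_left hsle (abs_nonneg _)
        _ = x₂ ^ 2 / a := by rw [mul_div_assoc', ← sq_abs, sq]
    have hdiv : x₂ ^ 2 / a ≤ 2 * (1 - ε₂) * x₂ ^ 2 := by
      rw [div_le_iff₀ ha0]
      nlinarith [sq_nonneg x₂]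
    have hclear : 2 * x₂ * (-x₂ + (1 / 2) * Real.sqrt |x₁|) ≤ -(2 * ε₂) * x₂ ^ 2 := by
      nlinarith [hxs, hdiv]
    calc (2 * x₂ / a ^ 2) * (-x₂ + (1 / 2) * Real.sqrt |x₁|)
        = (2 * x₂ * (-x₂ + (1 / 2) * Real.sqrt |x₁|)) / a ^ 2 := by ring
      _ ≤ (-(2 * ε₂) * x₂ ^ 2) / a ^ 2 := by
          exact (div_le_div_iff_of_pos_right (by positivity)).mpr hclear
      _ = -(2 * ε₂) * (x₂ ^ 2 / a ^ 2) := by ring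
  refine ⟨key1, key2, ?_⟩
  intro x₁ x₂ t hd1 hd2
  set d₁ : ℝ := -x₁ t + (x₂ t) ^ 2 with hd₁def
  set d₂ : ℝ := -x₂ t + (1 / 2) * Real.sqrt |x₁ t| with hd₂def
  set v1 : ℝ := |x₁ t| with hv1def
  set v2 : ℝ := (x₂ t) ^ 2 / a ^ 2 with hv2def
  have hv1nn : 0 ≤ v1 := abs_nonneg _
  have hv2nn : 0 ≤ v2 := by positivity
  have hV2 : HasDerivAt (fun s => (x₂ s) ^ 2 / a ^ 2) ((2 * x₂ t / a ^ 2) * d₂) t := by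
    have := (hd2.pow 2).div_const (a ^ 2)
    simp only [Pi.pow_apply] at this
    refine this.congr_deriv ?_
    push_cast
    ring
  have hminnn : 0 < min ε₁ (2 * ε₂) := lt_min he1 (by linarith)
  -- continuity of the translated functions
  have hct : Tendsto (fun h : ℝ => t + h) (nhds 0) (nhds t) := by
    have : Tendsto (fun h : ℝ => t + h) (nhds 0) (nhds (t + 0)) :=
      (continuous_const.add continuous_id).tendsto (0 : ℝ)
    simpa using this
  have hc1 : Tendsto (fun h : ℝ => |x₁ (t + h)|) (nhds 0) (nhds v1) :=
    ((continuous_abs.tendsto _).comp (hd1.continuousAt.tendsto.comp hct))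
  have hc2 : Tendsto (fun h : ℝ => (x₂ (t + h)) ^ 2 / a ^ 2) (nhds 0) (nhds v2) := by
    have := hd2.continuousAt.tendsto.comp hct
    exact (this.pow 2).div_const (a ^ 2)
  rcases lt_trichotomy v2 v1 with hc | hc | hc
  · -- Case |x₁ t| dominates strictly
    have hx1ne : x₁ t ≠ 0 := by
      intro h0
      rw [hv1def, h0] at hc
      simp at hc
      linarith [hv2nn, hc]
    have hV1 : HasDerivAt (fun s => |x₁ s|) (d₁ * Real.sign (x₁ t)) t :=
      hasDerivAt_abs_comp' hd1 hx1ne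
    have hev : ∀ᶠ h in nhdsWithin (0:ℝ) (Ioi 0),
        (x₂ (t + h)) ^ 2 / a ^ 2 < |x₁ (t + h)| :=
      (hc2.eventually_lt hc1 hc).filter_mono nhdsWithin_le_nhds
    have heq : (fun h : ℝ =>
        (max |x₁ (t + h)| ((x₂ (t + h)) ^ 2 / a ^ 2) - max v1 v2) / h)
        =ᶠ[nhdsWithin (0:ℝ) (Ioi 0)] fun h => (|x₁ (t + h)| - |x₁ t|) / h := by
      filter_upwards [hev] with h hh
      rw [max_eq_left hh.le, max_eq_left hc.le]
    rw [limsup_congr heq, (tendsto_slope_right' hV1).limsup_eq]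
    have h1 : d₁ * Real.sign (x₁ t) ≤ -ε₁ * v1 := key1 (x₁ t) (x₂ t) hc.le
    have h2 : min ε₁ (2 * ε₂) * v1 ≤ ε₁ * v1 :=
      mul_le_mul_of_nonneg_right (min_le_left _ _) hv1nn
    rw [max_eq_left hc.le]
    linarith
  · -- equality case
    rcases eq_or_ne (x₁ t) 0 with hx1z | hx1ne
    · -- everything vanishes
      have hv1z : v1 = 0 := by rw [hv1def, hx1z]; simp
      have hx2z : x₂ t = 0 := by
        have hz : (x₂ t) ^ 2 / a ^ 2 = 0 := by rw [← hv2def, hc, hv1z]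
        rw [div_eq_zero_iff] at hz
        rcases hz with hz | hz
        · exact pow_eq_zero_iff (two_ne_zero) |>.mp hz
        · exact absurd hz (by positivity)
      have hd1z : d₁ = 0 := by rw [hd₁def, hx1z, hx2z]; ring
      have hd2z : d₂ = 0 := by rw [hd₂def, hx2z, hv1z]; simp
      have hq1 : Tendsto (fun h : ℝ => (|x₁ (t + h)| - v1) / h)
          (nhdsWithin (0:ℝ) (Ioi 0)) (nhds 0) := by
        have habs : Tendsto (fun h : ℝ => |(x₁ (t + h) - x₁ t) / h|)
            (nhdsWithin (0:ℝ) (Ioi 0)) (nhds |d₁|) :=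
          (tendsto_slope_right' hd1).abs
        rw [hd1z, abs_zero] at habs
        apply habs.congr'
        filter_upwards [self_mem_nhdsWithin] with h hh
        have hhpos : (0:ℝ) < h := hh
        rw [abs_div, abs_of_pos hhpos, hx1z, sub_zero, hv1z, sub_zero]
      have hq2 : Tendsto (fun h : ℝ => ((x₂ (t + h)) ^ 2 / a ^ 2 - v2) / h)
          (nhdsWithin (0:ℝ) (Ioi 0)) (nhds 0) := by
        have := tendsto_slope_right' hV2
        rwa [hd2z, mul_zero] at this
      have heq : (fun h : ℝ =>
          (max |x₁ (t + h)| ((x₂ (t + h)) ^ 2 / a ^ 2) - max v1 v2) / h)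
          =ᶠ[nhdsWithin (0:ℝ) (Ioi 0)]
          fun h => max ((|x₁ (t + h)| - v1) / h) (((x₂ (t + h)) ^ 2 / a ^ 2 - v2) / h) := by
        filter_upwards [self_mem_nhdsWithin] with h hh
        have hhpos : (0:ℝ) < h := hh
        rw [hc, max_self, ← max_sub_sub_right, ← max_div_div_right hhpos.le]
      rw [limsup_congr heq, (hq1.max hq2).limsup_eq]
      have : max v1 v2 = 0 := by rw [hc, hv1z, max_self]
      rw [this, mul_zero, max_self]
    · have hV1 : HasDerivAt (fun s => |x₁ s|) (d₁ * Real.sign (x₁ t)) t :=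
        hasDerivAt_abs_comp' hd1 hx1ne
      have hq1 := tendsto_slope_right' hV1
      have hq2 := tendsto_slope_right' hV2
      have heq : (fun h : ℝ =>
          (max |x₁ (t + h)| ((x₂ (t + h)) ^ 2 / a ^ 2) - max v1 v2) / h)
          =ᶠ[nhdsWithin (0:ℝ) (Ioi 0)]
          fun h => max ((|x₁ (t + h)| - v1) / h) (((x₂ (t + h)) ^ 2 / a ^ 2 - v2) / h) := by
        filter_upwards [self_mem_nhdsWithin] with h hh
        have hhpos : (0:ℝ) < h := hh
        rw [hc, max_self, ← max_sub_sub_right, ← max_div_div_right hhpos.le]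
      rw [limsup_congr heq, (hq1.max hq2).limsup_eq]
      have hb1 : d₁ * Real.sign (x₁ t) ≤ -ε₁ * v1 := key1 (x₁ t) (x₂ t) hc.le
      have hb2 : (2 * x₂ t / a ^ 2) * d₂ ≤ -(2 * ε₂) * v2 := key2 (x₁ t) (x₂ t) hc.ge
      have hmax : max v1 v2 = v1 := max_eq_left hc.le
      rw [hmax]
      apply max_le
      · have : min ε₁ (2 * ε₂) * v1 ≤ ε₁ * v1 :=
          mul_le_mul_of_nonneg_right (min_le_left _ _) hv1nn
        linarith
      · have hmm : min ε₁ (2 * ε₂) * v1 ≤ (2 * ε₂) * v1 :=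
          mul_le_mul_of_nonneg_right (min_le_right _ _) hv1nn
        rw [hc] at hb2
        linarith
  · -- Case x₂²/a² dominates strictly
    have hev : ∀ᶠ h in nhdsWithin (0:ℝ) (Ioi 0),
        |x₁ (t + h)| < (x₂ (t + h)) ^ 2 / a ^ 2 :=
      (hc1.eventually_lt hc2 hc).filter_mono nhdsWithin_le_nhds
    have heq : (fun h : ℝ =>
        (max |x₁ (t + h)| ((x₂ (t + h)) ^ 2 / a ^ 2) - max v1 v2) / h)
        =ᶠ[nhdsWithin (0:ℝ) (Ioi 0)] fun h => ((x₂ (t + h)) ^ 2 / a ^ 2 - v2) / h := by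
      filter_upwards [hev] with h hh
      rw [max_eq_right hh.le, max_eq_right hc.le]
    rw [limsup_congr heq, (tendsto_slope_right' hV2).limsup_eq]
    have hb2 : (2 * x₂ t / a ^ 2) * d₂ ≤ -(2 * ε₂) * v2 := key2 (x₁ t) (x₂ t) hc.le
    have h2 : min ε₁ (2 * ε₂) * v2 ≤ (2 * ε₂) * v2 :=
      mul_le_mul_of_nonneg_right (min_le_right _ _) hv2nn
    rw [max_eq_right hc.le]
    linarith
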